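/- Let e: ℝⁿ → ℝⁿ be continuous, f: ℝⁿ×ℝᵐ → ℝⁿ, g: ℝⁿ×ℝᵐ → ℝᵖ, let P be an n×n symmetric positive-definite matrix, and let μ > 0. If the stability constraint |f(x₁,u) − f(x₂,u)|²_{P⁻¹} − 2(x₁−x₂)'(e(x₁)−e(x₂)) + |x₁−x₂|²_{P+μI} + |g(x₁,u)−g(x₂,u)|² ≤ 0 holds for all x₁, x₂ ∈ ℝⁿ and u ∈ ℝᵐ, then e is a bijection of ℝⁿ onto ℝⁿ. -/

import Mathlib

open Matrix

open Fin in
section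

lemma dot_self_nonneg' {k : ℕ} (v : Fin k → ℝ) : 0 ≤ v ⬝ᵥ v :=
  Finset.sum_nonneg fun i _ => mul_self_nonneg _

lemma continuous_snoc' {k : ℕ} :
    Continuous (fun q : (Fin k → ℝ) × ℝ => (Fin.snoc q.1 q.2 : Fin (k+1) → ℝ)) := by
  refine continuous_pi fun i => ?_
  refine Fin.lastCases ?_ ?_ i
  · simpa only [Fin.snoc_last] using continuous_snd
  · intro j
    simpa only [Fin.snoc_castSucc, Function.comp_def] using (continuous_apply j).comp continuous_fst

lemma strongMono_surjective : ∀ (k : ℕ) (F : (Fin k → ℝ) → (Fin k → ℝ)) (c : ℝ), 0 < c →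
    Continuous F →
    (∀ a b, c * ((a - b) ⬝ᵥ (a - b)) ≤ (a - b) ⬝ᵥ (F a - F b)) →
    Function.Surjective F := by
  intro k
  induction k with
  | zero => exact fun F c hc _ _ y => ⟨y, funext fun i => i.elim0⟩
  | succ k ih =>
    intro F c hc hF hmono y
    set Y := y (Fin.last k) with hY
    -- key 1-d monotonicity in the last coordinate
    have key : ∀ (x' : Fin k → ℝ) (s t : ℝ),
        c * ((s - t) * (s - t)) ≤
          (s - t) * (F (Fin.snoc x' s) (Fin.last k) - F (Fin.snoc x' t) (Fin.last k)) := by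
      intro x' s t
      have h := hmono (Fin.snoc x' s) (Fin.snoc x' t)
      simpa only [dotProduct, Fin.sum_univ_castSucc, Pi.sub_apply, Fin.snoc_castSucc,
        Fin.snoc_last, sub_self, zero_mul, mul_zero, Finset.sum_const_zero, zero_add] using h
    have hφcont : ∀ x' : Fin k → ℝ, Continuous (fun t => F (Fin.snoc x' t) (Fin.last k)) := by
      intro x'
      exact (continuous_apply (Fin.last k)).comp
        (hF.comp (continuous_snoc'.comp (continuous_const.prodMk continuous_id)))
    -- existence and uniqueness of the root in the last coordinate
    have hex : ∀ x' : Fin k → ℝ, ∃ t, F (Fin.snoc x' t) (Fin.last k) = Y := by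
      intro x'
      set φ : ℝ → ℝ := fun t => F (Fin.snoc x' t) (Fin.last k) with hφ
      have hgrow : ∀ t : ℝ, c * (t * t) ≤ t * (φ t - φ 0) := by
        intro t; simpa using key x' t 0
      have hup : ∀ t : ℝ, 0 ≤ t → φ 0 + c * t ≤ φ t := by
        intro t ht
        rcases eq_or_lt_of_le ht with h | h
        · simp [← h]
        · nlinarith [hgrow t]
      have hdn : ∀ t : ℝ, t ≤ 0 → φ t ≤ φ 0 + c * t := by
        intro t ht
        rcases eq_or_lt_of_le ht with h | h
        · simp [h]
        · nlinarith [hgrow t]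
      set r : ℝ := (Y - φ 0) / c with hr
      have hrc : φ 0 + c * r = Y := by rw [hr, mul_div_assoc', mul_div_cancel_left₀ _ hc.ne']; ring
      have h1 : φ (min 0 r) ≤ Y := by
        rcases le_total r 0 with h | h
        · have := hdn r h; rw [min_eq_right h]; linarith
        · rw [min_eq_left h]
          have := hup r h; nlinarith
      have h2 : Y ≤ φ (max 0 r) := by
        rcases le_total r 0 with h | h
        · rw [max_eq_left h]
          have := hdn r h; nlinarith
        · have := hup r h; rw [max_eq_right h]; linarith
      have hmm : min 0 r ≤ max 0 r := (min_le_left _ _).trans (le_max_left _ _)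
      have := intermediate_value_Icc hmm (hφcont x').continuousOn ⟨h1, h2⟩
      obtain ⟨t, _, ht⟩ := this
      exact ⟨t, ht⟩
    set τ : (Fin k → ℝ) → ℝ := fun x' => (hex x').choose with hτdef
    have hτ : ∀ x', F (Fin.snoc x' (τ x')) (Fin.last k) = Y := fun x' => (hex x').choose_spec
    -- continuity of τ
    have hτcont : Continuous τ := by
      rw [continuous_iff_continuousAt]
      intro b
      rw [ContinuousAt, tendsto_iff_dist_tendsto_zero]
      simp only [Real.dist_eq]
      have hbound : ∀ a, |τ a - τ b| ≤
          (1 / c) * |F (Fin.snoc b (τ b)) (Fin.last k) - F (Fin.snoc a (τ b)) (Fin.last k)| := by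
        intro a
        have hk := key a (τ a) (τ b)
        rw [hτ a, ← hτ b] at hk
        set d := τ a - τ b
        set r := F (Fin.snoc b (τ b)) (Fin.last k) - F (Fin.snoc a (τ b)) (Fin.last k)
        have h1 : d * r ≤ |d| * |r| := by
          calc d * r ≤ |d * r| := le_abs_self _
          _ = |d| * |r| := abs_mul _ _
        have h2 : |d| * |d| = d * d := abs_mul_abs_self d
        rcases eq_or_lt_of_le (abs_nonneg d) with h | h
        · rw [← h]; positivity
        · have h3 : c * |d| * |d| ≤ |r| * |d| := by nlinarith
          have hcd : c * |d| ≤ |r| := le_of_mul_le_mul_right h3 h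
          rw [one_div, inv_mul_eq_div, le_div_iff₀ hc]
          linarith
      refine squeeze_zero (fun a => abs_nonneg _) hbound ?_
      have hgc : Continuous (fun a => (1 / c) *
          |F (Fin.snoc b (τ b)) (Fin.last k) - F (Fin.snoc a (τ b)) (Fin.last k)|) := by
        refine Continuous.mul continuous_const ?_
        refine Continuous.abs (Continuous.sub continuous_const ?_)
        exact (continuous_apply (Fin.last k)).comp
          (hF.comp (continuous_snoc'.comp (continuous_id.prodMk continuous_const)))
      have := hgc.tendsto b
      simpa using this
    -- the reduced map
    set G : (Fin k → ℝ) → (Fin k → ℝ) := fun x' => Fin.init (F (Fin.snoc x' (τ x'))) with hG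
    have hGcont : Continuous G := by
      refine continuous_pi fun i => ?_
      simp only [hG, Fin.init]
      exact (continuous_apply (Fin.castSucc i)).comp
        (hF.comp (continuous_snoc'.comp (continuous_id.prodMk hτcont)))
    have hGmono : ∀ a b, c * ((a - b) ⬝ᵥ (a - b)) ≤ (a - b) ⬝ᵥ (G a - G b) := by
      intro a b
      have h := hmono (Fin.snoc a (τ a)) (Fin.snoc b (τ b))
      simp only [dotProduct, Fin.sum_univ_castSucc, Pi.sub_apply, Fin.snoc_castSucc,
        Fin.snoc_last, hτ a, hτ b, sub_self, mul_zero, add_zero] at h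
      simp only [dotProduct, Pi.sub_apply, hG, Fin.init]
      nlinarith [mul_nonneg hc.le (mul_self_nonneg (τ a - τ b))]
    obtain ⟨x', hx'⟩ := ih G c hc hGcont hGmono (Fin.init y)
    refine ⟨Fin.snoc x' (τ x'), funext fun i => ?_⟩
    refine Fin.lastCases ?_ (fun j => ?_) i
    · exact hτ x'
    · have := congrFun hx' j
      simpa [hG, Fin.init] using this
end

/-- If `e` is continuous and the stability constraint holds for all
`x₁, x₂, u`, then `e` is a bijection of `ℝⁿ` onto `ℝⁿ`. -/
theorem stmt2 {n m p : ℕ}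
    (e : (Fin n → ℝ) → (Fin n → ℝ)) (he : Continuous e)
    (f : (Fin n → ℝ) → (Fin m → ℝ) → (Fin n → ℝ))
    (g : (Fin n → ℝ) → (Fin m → ℝ) → (Fin p → ℝ))
    (P : Matrix (Fin n) (Fin n) ℝ) (hP : P.PosDef) (μ : ℝ) (hμ : 0 < μ)
    (hstab : ∀ (x₁ x₂ : Fin n → ℝ) (u : Fin m → ℝ),
      (f x₁ u - f x₂ u) ⬝ᵥ (P⁻¹ *ᵥ (f x₁ u - f x₂ u))
        - 2 * ((x₁ - x₂) ⬝ᵥ (e x₁ - e x₂))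
        + (x₁ - x₂) ⬝ᵥ ((P + μ • (1 : Matrix (Fin n) (Fin n) ℝ)) *ᵥ (x₁ - x₂))
        + (g x₁ u - g x₂ u) ⬝ᵥ (g x₁ u - g x₂ u) ≤ 0) :
    Function.Bijective e := by
  have hmono : ∀ a b : Fin n → ℝ,
      (μ / 2) * ((a - b) ⬝ᵥ (a - b)) ≤ (a - b) ⬝ᵥ (e a - e b) := by
    intro a b
    have h := hstab a b (fun _ => 0)
    have h1 : 0 ≤ (f a (fun _ => 0) - f b (fun _ => 0)) ⬝ᵥ
        (P⁻¹ *ᵥ (f a (fun _ => 0) - f b (fun _ => 0))) := by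
      have := hP.inv.posSemidef.dotProduct_mulVec_nonneg (f a (fun _ => 0) - f b (fun _ => 0))
      simpa using this
    have h3 : 0 ≤ (g a (fun _ => 0) - g b (fun _ => 0)) ⬝ᵥ
        (g a (fun _ => 0) - g b (fun _ => 0)) := dot_self_nonneg' _
    have h2 : μ * ((a - b) ⬝ᵥ (a - b)) ≤ (a - b) ⬝ᵥ
        ((P + μ • (1 : Matrix (Fin n) (Fin n) ℝ)) *ᵥ (a - b)) := by
      have hp : 0 ≤ (a - b) ⬝ᵥ (P *ᵥ (a - b)) := by
        have := hP.posSemidef.dotProduct_mulVec_nonneg (a - b); simpa using this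
      rw [add_mulVec, dotProduct_add, smul_mulVec, one_mulVec, dotProduct_smul,
        smul_eq_mul]
      linarith
    linarith
  constructor
  · intro a b hab
    have h := hmono a b
    rw [hab, sub_self, dotProduct_zero] at h
    have h2 : (a - b) ⬝ᵥ (a - b) ≤ 0 := by nlinarith
    have h3 : (a - b) ⬝ᵥ (a - b) = 0 := le_antisymm h2 (dot_self_nonneg' _)
    have := (dotProduct_self_eq_zero (v := a - b)).mp h3
    exact sub_eq_zero.mp this
  · exact strongMono_surjective n e (μ / 2) (by linarith) he hmono
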